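/- Let D be a digraph of order n and let x, y be distinct vertices with d(x) + d(y) ≥ 2n − 1. If D is {x,y}-strongly connected, then x and y lie on a common directed cycle of D on which they are at distance at most two (i.e., the cycle contains a subpath from x to y, or from y to x, of length at most two). -/

import Mathlib

/-!
Basic definitions for finite digraphs (no loops, no multiple arcs), where the arc
relation is `A : V → V → Prop`.  Paths and cycles are given as lists of (distinct)
vertices.
-/

variable {V : Type*}

/-- A (directed) path, given by the list of its vertices. -/
def IsPathOn (A : V → V → Prop) (l : List V) : Prop :=
  l ≠ [] ∧ l.Nodup ∧ l.Chain' A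

/-- A (directed) cycle, given by the list of its vertices; its length (number of
arcs) equals the length of the list. -/
def IsCycleOn (A : V → V → Prop) (l : List V) : Prop :=
  2 ≤ l.length ∧ l.Nodup ∧ l.Chain' A ∧
    ∀ a ∈ l.getLast?, ∀ b ∈ l.head?, A a b

/-- A directed path from `a` to `b`. -/
def IsPathFromTo (A : V → V → Prop) (l : List V) (a b : V) : Prop :=
  IsPathOn A l ∧ l.head? = some a ∧ l.getLast? = some b

/-- Out-degree `d⁺(x)`. -/
noncomputable def outDeg (A : V → V → Prop) (x : V) : ℕ := {y | A x y}.ncard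

/-- In-degree `d⁻(x)`. -/
noncomputable def inDeg (A : V → V → Prop) (x : V) : ℕ := {y | A y x}.ncard

/-- Degree `d(x) = d⁺(x) + d⁻(x)`. -/
noncomputable def deg (A : V → V → Prop) (x : V) : ℕ := outDeg A x + inDeg A x

/-- Out-degree into a set, `d⁺(x, S)`. -/
noncomputable def outDegOn (A : V → V → Prop) (x : V) (S : Set V) : ℕ :=
  {y ∈ S | A x y}.ncard

/-- In-degree from a set, `d⁻(x, S)`. -/
noncomputable def inDegOn (A : V → V → Prop) (x : V) (S : Set V) : ℕ :=
  {y ∈ S | A y x}.ncard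

/-- Degree with respect to a set, `d(x, S) = d⁺(x, S) + d⁻(x, S)`. -/
noncomputable def degOn (A : V → V → Prop) (x : V) (S : Set V) : ℕ :=
  outDegOn A x S + inDegOn A x S

/-- Two distinct vertices are adjacent if there is an arc between them in some
direction. -/
def DAdj (A : V → V → Prop) (x y : V) : Prop := A x y ∨ A y x

/-- `D` is `S`-strongly connected: between any two distinct vertices of `S` there
are directed paths in both directions. -/
def SetStronglyConnected (A : V → V → Prop) (S : Set V) : Prop :=
  ∀ x ∈ S, ∀ y ∈ S, x ≠ y → ∃ l, IsPathFromTo A l x y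

/-- Strong connectivity. -/
def StronglyConnected (A : V → V → Prop) : Prop :=
  ∀ x y : V, x ≠ y → ∃ l, IsPathFromTo A l x y

/-- 2-strong connectivity: at least 3 vertices, and deleting any vertex leaves a
strongly connected digraph. -/
def TwoStronglyConnected [Fintype V] (A : V → V → Prop) : Prop :=
  3 ≤ Fintype.card V ∧
    ∀ w x y : V, x ≠ w → y ≠ w → x ≠ y → ∃ l, IsPathFromTo A l x y ∧ w ∉ l

/-- Condition `A₀` for a set `Y` of vertices. -/
def CondA0 [Fintype V] (A : V → V → Prop) (Y : Set V) : Prop :=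
  ∀ x ∈ Y, ∀ y ∈ Y, ∀ z ∈ Y,
    x ≠ y → x ≠ z → y ≠ z → ¬ DAdj A x y →
      (¬ A x z →
        deg A x + deg A y + outDeg A x + inDeg A z ≥ 3 * Fintype.card V - 2) ∧
      (¬ A z x →
        deg A x + deg A y + inDeg A x + outDeg A z ≥ 3 * Fintype.card V - 2)

/-- A `C`-bypass: a path of length at least two whose end-vertices lie on the
cycle `c` and whose internal vertices avoid `c`. -/
def IsBypass (A : V → V → Prop) (c p : List V) : Prop :=
  IsPathOn A p ∧ 3 ≤ p.length ∧
    (∀ a ∈ p.head?, a ∈ c) ∧ (∀ b ∈ p.getLast?, b ∈ c) ∧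
    ∀ v ∈ p.tail.dropLast, v ∉ c

/-- The vertex `y` can be inserted into the path `p`. -/
def CanInsert (A : V → V → Prop) (p : List V) (y : V) : Prop :=
  ∃ i, ∃ h : i + 1 < p.length, A (p[i]'(Nat.lt_of_succ_lt h)) y ∧ A y (p[i+1]'h)

/-- A `(C, x)`-path: a path from a vertex `u` of the cycle `c` to `x`, meeting `c`
only in `u`. -/
def IsCtoXPath (A : V → V → Prop) (c l : List V) (u x : V) : Prop :=
  IsPathFromTo A l u x ∧ u ∈ c ∧ ∀ v ∈ l, v ∈ c → v = u

/-- An `(x, C)`-path: a path from `x` to a vertex `v` of the cycle `c`, meeting `c`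
only in `v`. -/
def IsXtoCPath (A : V → V → Prop) (c l : List V) (x v : V) : Prop :=
  IsPathFromTo A l x v ∧ v ∈ c ∧ ∀ w ∈ l, w ∈ c → w = v

section CommonCycleAux

lemma pft_getElem_zero {A : V → V → Prop} {l : List V} {a b : V}
    (h : IsPathFromTo A l a b) (h0 : 0 < l.length) : l[0] = a := by
  have hne := h.1.1
  have h1 := h.2.1
  rw [List.head?_eq_head hne] at h1
  have h2 : l.head hne = a := Option.some.inj h1
  rw [List.head_eq_getElem] at h2
  exact h2

lemma pft_getElem_last {A : V → V → Prop} {l : List V} {a b : V}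
    (h : IsPathFromTo A l a b) (h0 : l.length - 1 < l.length) : l[l.length - 1] = b := by
  have hne := h.1.1
  have h1 := h.2.2
  rw [List.getLast?_eq_getLast hne] at h1
  have h2 : l.getLast hne = b := Option.some.inj h1
  rw [List.getLast_eq_getElem] at h2
  exact h2

lemma pft_len_pos {A : V → V → Prop} {l : List V} {a b : V}
    (h : IsPathFromTo A l a b) : 0 < l.length :=
  List.length_pos_iff.mpr h.1.1

lemma pft_len_two {A : V → V → Prop} {l : List V} {a b : V}
    (h : IsPathFromTo A l a b) (hab : a ≠ b) : 2 ≤ l.length := by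
  obtain ⟨⟨hne, hnd, hch⟩, hh, hl⟩ := h
  rcases l with _ | ⟨c, l⟩
  · exact absurd rfl hne
  rcases l with _ | ⟨d, l⟩
  · simp at hh hl
    exact absurd (hh.symm.trans hl) hab
  · simp

/-- Close a path into a cycle using an arc from the end back to the start. -/
lemma cycle_of_path_arc {A : V → V → Prop} {l : List V} {a b : V}
    (h : IsPathFromTo A l a b) (hba : A b a) (hab : a ≠ b) : IsCycleOn A l := by
  refine ⟨pft_len_two h hab, h.1.2.1, h.1.2.2, ?_⟩
  intro a' ha' b' hb'
  rw [h.2.2] at ha'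
  rw [h.2.1] at hb'
  simp at ha' hb'
  subst ha'; subst hb'; exact hba

/-- Close a path plus an external vertex into a cycle. -/
lemma cycle_cons {A : V → V → Prop} {l : List V} {a b z : V}
    (h : IsPathFromTo A l a b) (hz : z ∉ l) (hbz : A b z) (hza : A z a) :
    IsCycleOn A (z :: l) := by
  have hne := h.1.1
  refine ⟨by simp; have := pft_len_pos h; omega, List.nodup_cons.mpr ⟨hz, h.1.2.1⟩, ?_, ?_⟩
  · unfold List.Chain'; rw [List.isChain_cons]
    refine ⟨?_, h.1.2.2⟩
    intro y hy
    rw [h.2.1] at hy; simp at hy; subst hy; exact hza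
  · intro a' ha' b' hb'
    have : (z :: l).getLast? = some b := by
      rw [show z :: l = [z] ++ l from rfl, List.getLast?_append, h.2.2]; rfl
    rw [this] at ha'
    simp at ha' hb'
    subst ha'; subst hb'; exact hbz

lemma exists_min_path {A : V → V → Prop} {a b : V} (h : ∃ l, IsPathFromTo A l a b) :
    ∃ l, IsPathFromTo A l a b ∧ ∀ l', IsPathFromTo A l' a b → l.length ≤ l'.length := by
  obtain ⟨l0, h0⟩ := h
  have hS : {m | ∃ l, IsPathFromTo A l a b ∧ l.length = m}.Nonempty := ⟨l0.length, l0, h0, rfl⟩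
  obtain ⟨l, hl, hlen⟩ := Nat.sInf_mem hS
  exact ⟨l, hl, fun l' h' => hlen ▸ Nat.sInf_le ⟨l', h', rfl⟩⟩

/-- A minimal path has no forward shortcuts. -/
lemma no_shortcut {A : V → V → Prop} {q : List V} {a b : V}
    (hq : IsPathFromTo A q a b)
    (hmin : ∀ l, IsPathFromTo A l a b → q.length ≤ l.length)
    {i j : ℕ} (hij : i + 2 ≤ j) (hj : j < q.length)
    (harc : A (q[i]'(by omega)) q[j]) : False := by
  have hqne : q ≠ [] := hq.1.1
  have hlen : 0 < q.length := List.length_pos_iff.mpr hqne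
  have hi : i < q.length := by omega
  set l' := q.take (i+1) ++ q.drop j with hl'
  have htake_ne : q.take (i+1) ≠ [] :=
    List.length_pos_iff.mp (by rw [List.length_take]; omega)
  have hdrop_ne : q.drop j ≠ [] :=
    List.length_pos_iff.mp (by rw [List.length_drop]; omega)
  have hsub : l'.Sublist q := by
    have h1 : (q.drop j).Sublist (q.drop (i+1)) := by
      rw [show j = (i+1) + (j - (i+1)) by omega, ← List.drop_drop]
      exact List.drop_sublist _ _
    have h2 : l'.Sublist (q.take (i+1) ++ q.drop (i+1)) :=
      (List.append_sublist_append_left _).mpr h1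
    rw [List.take_append_drop] at h2
    exact h2
  have hlast_take : (q.take (i+1)).getLast? = some (q[i]'hi) := by
    have hlt : (q.take (i+1)).length = i + 1 := by rw [List.length_take]; omega
    rw [List.getLast?_eq_getElem?, hlt]
    simp only [Nat.add_sub_cancel]
    rw [List.getElem?_take]
    rw [if_pos (by omega : i < i + 1), List.getElem?_eq_getElem hi]
  have hhead_drop : (q.drop j).head? = some q[j] := by
    rw [List.head?_drop, List.getElem?_eq_getElem hj]
  have hpath : IsPathFromTo A l' a b := by
    refine ⟨⟨by simp [hl', htake_ne], hsub.nodup hq.1.2.1, ?_⟩, ?_, ?_⟩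
    · rw [hl']; unfold List.Chain'; rw [List.isChain_append]
      refine ⟨hq.1.2.2.take _, hq.1.2.2.drop _, ?_⟩
      intro a' ha' b' hb'
      rw [hlast_take] at ha'
      rw [hhead_drop] at hb'
      simp at ha' hb'
      subst ha'; subst hb'; exact harc
    · rw [hl', List.head?_append_of_ne_nil _ htake_ne]
      have : (q.take (i+1)).head? = q.head? := by
        rcases q with _ | ⟨c, t⟩
        · exact absurd rfl hqne
        · simp [List.take_succ_cons]
      rw [this, hq.2.1]
    · rw [hl', List.getLast?_append, List.getLast?_eq_getElem?]
      have hld : (q.drop j).length = q.length - j := List.length_drop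
      rw [hld, List.getElem?_drop]
      have : j + (q.length - j - 1) = q.length - 1 := by omega
      rw [this, ← List.getLast?_eq_getElem?, hq.2.2]; rfl
  have := hmin l' hpath
  rw [hl'] at this
  simp [List.length_take, List.length_drop] at this
  omega

open Classical in
lemma deg_add_deg [Fintype V] (A : V → V → Prop) (x y : V) :
    deg A x + deg A y = ∑ z : V,
      ((if A x z then 1 else 0) + (if A z x then 1 else 0) +
       (if A y z then 1 else 0) + (if A z y then 1 else 0)) := by
  classical
  unfold deg outDeg inDeg
  rw [Set.ncard_eq_toFinset_card', Set.ncard_eq_toFinset_card',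
    Set.ncard_eq_toFinset_card', Set.ncard_eq_toFinset_card']
  simp only [Set.toFinset_setOf]
  rw [Finset.card_filter, Finset.card_filter, Finset.card_filter, Finset.card_filter,
    ← Finset.sum_add_distrib, ← Finset.sum_add_distrib, ← Finset.sum_add_distrib]
  exact Finset.sum_congr rfl (fun z _ => by ring)

open Classical in
lemma deg_bound_aux [Fintype V] {A : V → V → Prop} (hloops : ∀ v, ¬ A v v) {x y : V}
    (hxy : x ≠ y) (hnxy : ¬ A x y) (hnyx : ¬ A y x)
    (hdeg : 2 * Fintype.card V - 1 ≤ deg A x + deg A y)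
    (g : V → ℕ)
    (hpt : ∀ z, z ≠ x → z ≠ y →
      (if A x z then 1 else 0) + (if A z x then 1 else 0) +
      (if A y z then 1 else 0) + (if A z y then 1 else 0) ≤ 2 + g z) :
    2 * Fintype.card V - 1 ≤ 2 * (Fintype.card V - 2) + ∑ z : V, g z := by
  classical
  set n := Fintype.card V with hn
  set f : V → ℕ := fun z => (if A x z then 1 else 0) + (if A z x then 1 else 0) +
       (if A y z then 1 else 0) + (if A z y then 1 else 0) with hf
  have hsum : deg A x + deg A y = ∑ z : V, f z := deg_add_deg A x y
  have hfx : f x = 0 := by simp [hf, hloops x, hnxy, hnyx]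
  have hfy : f y = 0 := by simp [hf, hloops y, hnxy, hnyx]
  set s : Finset V := (Finset.univ.erase x).erase y with hs
  have hes : ∑ z ∈ s, f z = ∑ z : V, f z := by
    rw [hs, Finset.sum_erase _ hfy, Finset.sum_erase _ hfx]
  have hcard_s : s.card = n - 2 := by
    have h1 : y ∈ Finset.univ.erase x := Finset.mem_erase.mpr ⟨hxy.symm, Finset.mem_univ y⟩
    rw [hs, Finset.card_erase_of_mem h1, Finset.card_erase_of_mem (Finset.mem_univ x),
      Finset.card_univ]
    omega
  have hle : ∑ z ∈ s, f z ≤ ∑ z ∈ s, (2 + g z) := by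
    refine Finset.sum_le_sum ?_
    intro z hz
    rw [hs] at hz
    simp only [Finset.mem_erase] at hz
    exact hpt z hz.2.1 hz.1
  have hsplit : ∑ z ∈ s, (2 + g z) = s.card * 2 + ∑ z ∈ s, g z := by
    rw [Finset.sum_add_distrib, Finset.sum_const, smul_eq_mul]
  have hg : ∑ z ∈ s, g z ≤ ∑ z : V, g z :=
    Finset.sum_le_sum_of_subset (Finset.subset_univ s)
  omega

open Classical in
lemma ab_three [Fintype V] {A : V → V → Prop} (hloops : ∀ v, ¬ A v v) {x y : V} (hxy : x ≠ y)
    (hdeg : 2 * Fintype.card V - 1 ≤ deg A x + deg A y)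
    (hnxy : ¬ A x y) (hnyx : ¬ A y x) :
    3 ≤ (Finset.univ.filter (fun z => A x z ∧ A z y)).card
      + (Finset.univ.filter (fun z => A y z ∧ A z x)).card := by
  classical
  have hn2 : 2 ≤ Fintype.card V := Fintype.one_lt_card_iff_nontrivial.mpr ⟨⟨x, y, hxy⟩⟩
  have key := deg_bound_aux hloops hxy hnxy hnyx hdeg
    (fun z => (if A x z ∧ A z y then 1 else 0) + (if A y z ∧ A z x then 1 else 0))
    (by
      intro z hzx hzy
      by_cases h1 : A x z <;> by_cases h2 : A z x <;> by_cases h3 : A y z <;>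
        by_cases h4 : A z y <;> simp [h1, h2, h3, h4])
  rw [Finset.sum_add_distrib] at key
  rw [Finset.card_filter, Finset.card_filter]
  omega

open Classical in
lemma midpoint_out_card [Fintype V] {A : V → V → Prop} (hloops : ∀ v, ¬ A v v) {x y : V}
    {q : List V} (hq : IsPathFromTo A q y x)
    (hmin : ∀ l, IsPathFromTo A l y x → q.length ≤ l.length) :
    (Finset.univ.filter (fun z => A y z ∧ z ∈ q)).card ≤ 1 := by
  classical
  rw [Finset.card_le_one]
  have key : ∀ z, A y z → z ∈ q → ∃ _ : 1 < q.length, z = q[1] := by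
    intro z hz hzq
    obtain ⟨s, hs, hzeq⟩ := List.mem_iff_getElem.mp hzq
    have h0 : q[0]'(by omega) = y := pft_getElem_zero hq (by omega)
    have hs0 : s ≠ 0 := by
      rintro rfl
      rw [← hzeq, h0] at hz
      exact hloops y hz
    have hs2 : s < 2 := by
      by_contra h
      refine no_shortcut hq hmin (i := 0) (j := s) (by omega) hs ?_
      rw [h0, hzeq]
      exact hz
    have : s = 1 := by omega
    subst this
    exact ⟨hs, hzeq.symm⟩
  intro a ha b hb
  simp only [Finset.mem_filter] at ha hb
  obtain ⟨_, ha3⟩ := key a ha.2.1 ha.2.2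
  obtain ⟨_, hb3⟩ := key b hb.2.1 hb.2.2
  rw [ha3, hb3]

open Classical in
lemma midpoint_in_card [Fintype V] {A : V → V → Prop} (hloops : ∀ v, ¬ A v v) {x y : V}
    {q : List V} (hq : IsPathFromTo A q y x)
    (hmin : ∀ l, IsPathFromTo A l y x → q.length ≤ l.length) :
    (Finset.univ.filter (fun z => A z x ∧ z ∈ q)).card ≤ 1 := by
  classical
  rw [Finset.card_le_one]
  have key : ∀ z, A z x → z ∈ q → ∃ _ : q.length - 2 < q.length, z = q[q.length - 2] := by
    intro z hz hzq
    obtain ⟨s, hs, hzeq⟩ := List.mem_iff_getElem.mp hzq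
    have hlast : q[q.length - 1]'(by omega) = x := pft_getElem_last hq (by omega)
    have hs1 : s ≠ q.length - 1 := by
      rintro rfl
      rw [hlast] at hzeq
      rw [← hzeq] at hz
      exact hloops x hz
    have hs2 : ¬ (s + 2 ≤ q.length - 1) := by
      intro h
      refine no_shortcut hq hmin (i := s) (j := q.length - 1) h (by omega) ?_
      rw [hlast, hzeq]
      exact hz
    have : s = q.length - 2 := by omega
    subst this
    exact ⟨hs, hzeq.symm⟩
  intro a ha b hb
  simp only [Finset.mem_filter] at ha hb
  obtain ⟨_, ha3⟩ := key a ha.2.1 ha.2.2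
  obtain ⟨_, hb3⟩ := key b hb.2.1 hb.2.2
  rw [ha3, hb3]

open Classical in
lemma min_path_contra [Fintype V] {A : V → V → Prop} (hloops : ∀ v, ¬ A v v) {x y : V}
    (hxy : x ≠ y)
    (hdeg : 2 * Fintype.card V - 1 ≤ deg A x + deg A y)
    (hnxy : ¬ A x y) (hnyx : ¬ A y x)
    {q : List V} (hq : IsPathFromTo A q y x)
    (hmin : ∀ l, IsPathFromTo A l y x → q.length ≤ l.length)
    (hZa : ∀ z, A x z → A z y → z ∈ q)
    (hZb : ∀ z, ¬ (A y z ∧ A z x)) : False := by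
  classical
  have hn2 : 2 ≤ Fintype.card V := Fintype.one_lt_card_iff_nontrivial.mpr ⟨⟨x, y, hxy⟩⟩
  have key := deg_bound_aux hloops hxy hnxy hnyx hdeg
    (fun z => (if A y z ∧ z ∈ q then 1 else 0) + (if A z x ∧ z ∈ q then 1 else 0))
    (by
      intro z hzx hzy
      by_cases hzq : z ∈ q
      · by_cases h1 : A x z <;> by_cases h2 : A z x <;> by_cases h3 : A y z <;>
          by_cases h4 : A z y <;> simp [h1, h2, h3, h4, hzq]
      · have h14 : ¬ (A x z ∧ A z y) := fun ⟨u1, u2⟩ => hzq (hZa z u1 u2)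
        have h23 := hZb z
        by_cases h1 : A x z <;> by_cases h2 : A z x <;> by_cases h3 : A y z <;>
          by_cases h4 : A z y <;> simp [h1, h2, h3, h4, hzq] <;> tauto)
  rw [Finset.sum_add_distrib] at key
  have c1 := midpoint_out_card hloops hq hmin
  have c2 := midpoint_in_card hloops hq hmin
  rw [Finset.card_filter] at c1 c2
  omega

lemma getLast?_cons_of_ne_nil {z : V} {l : List V} (h : l ≠ []) :
    (z :: l).getLast? = l.getLast? := by
  rw [show z :: l = [z] ++ l from rfl, List.getLast?_append, List.getLast?_eq_getLast h]
  rfl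

lemma getElem_last_of_getLast? {l : List V} {b : V} (h : l.getLast? = some b)
    (hh : l.length - 1 < l.length) : l[l.length - 1] = b := by
  have hne : l ≠ [] := by rintro rfl; simp at h
  rw [List.getLast?_eq_getLast hne] at h
  have h2 := Option.some.inj h
  rw [List.getLast_eq_getElem] at h2
  exact h2

lemma dist_le_two {len a b : ℕ} (h : len + a - b ≤ 2) : (len + a - b) % len ≤ 2 :=
  le_trans (Nat.mod_le _ _) h

lemma cycle4 {A : V → V → Prop} {x z y w : V}
    (hxz : A x z) (hzy : A z y) (hyw : A y w) (hwx : A w x)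
    (hxy : x ≠ y) (hzx : z ≠ x) (hzy' : z ≠ y) (hwx' : w ≠ x) (hwy : w ≠ y) (hzw : z ≠ w) :
    IsCycleOn A [x, z, y, w] := by
  refine ⟨by simp, ?_, ?_, ?_⟩
  · simp [List.nodup_cons]
    exact ⟨⟨hzx.symm, hxy, hwx'.symm⟩, ⟨hzy', hzw⟩, hwy.symm⟩
  · simp [List.Chain', List.isChain_cons_cons]
    exact ⟨hxz, hzy, hyw⟩
  · intro a ha b hb
    simp at ha hb
    subst ha; subst hb; exact hwx


end CommonCycleAux

/-- Lemma 3.10. -/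
theorem common_cycle_at_distance_two [Fintype V] (A : V → V → Prop)
    (hloops : ∀ v, ¬ A v v)
    (x y : V) (hxy : x ≠ y)
    (hdeg : deg A x + deg A y ≥ 2 * Fintype.card V - 1)
    (hconn : SetStronglyConnected A {x, y}) :
    ∃ l : List V, IsCycleOn A l ∧
      ∃ i j : Fin l.length, l.get i = x ∧ l.get j = y ∧
        ((l.length + j.val - i.val) % l.length ≤ 2 ∨
         (l.length + i.val - j.val) % l.length ≤ 2) := by
  classical
  have hxS : x ∈ ({x, y} : Set V) := by simp
  have hyS : y ∈ ({x, y} : Set V) := by simp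
  by_cases haxy : A x y
  · obtain ⟨q, hq⟩ := hconn y hyS x hxS hxy.symm
    refine ⟨q, cycle_of_path_arc hq haxy hxy.symm, ?_⟩
    have hlen : 2 ≤ q.length := pft_len_two hq hxy.symm
    refine ⟨⟨q.length - 1, by omega⟩, ⟨0, by omega⟩, ?_, ?_, ?_⟩
    · rw [List.get_eq_getElem]
      exact pft_getElem_last hq (by omega)
    · rw [List.get_eq_getElem]
      exact pft_getElem_zero hq (by omega)
    · left
      show (q.length + 0 - (q.length - 1)) % q.length ≤ 2
      exact dist_le_two (by omega)
  by_cases hayx : A y x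
  · obtain ⟨p, hp⟩ := hconn x hxS y hyS hxy
    refine ⟨p, cycle_of_path_arc hp hayx hxy, ?_⟩
    have hlen : 2 ≤ p.length := pft_len_two hp hxy
    refine ⟨⟨0, by omega⟩, ⟨p.length - 1, by omega⟩, ?_, ?_, ?_⟩
    · rw [List.get_eq_getElem]
      exact pft_getElem_zero hp (by omega)
    · rw [List.get_eq_getElem]
      exact pft_getElem_last hp (by omega)
    · right
      show (p.length + 0 - (p.length - 1)) % p.length ≤ 2
      exact dist_le_two (by omega)
  obtain ⟨q, hq, hminq⟩ := exists_min_path (hconn y hyS x hxS hxy.symm)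
  obtain ⟨p, hp, hminp⟩ := exists_min_path (hconn x hxS y hyS hxy)
  by_cases hc1 : ∃ z, A x z ∧ A z y ∧ z ∉ q
  · obtain ⟨z, hxz, hzy, hzq⟩ := hc1
    refine ⟨z :: q, cycle_cons hq hzq hxz hzy, ?_⟩
    have hlen : 2 ≤ q.length := pft_len_two hq hxy.symm
    refine ⟨⟨q.length, by simp⟩, ⟨1, by simp; omega⟩, ?_, ?_, ?_⟩
    · rw [List.get_eq_getElem]
      have hgl : (z :: q).getLast? = some x := by
        rw [getLast?_cons_of_ne_nil hq.1.1, hq.2.2]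
      have h2 := getElem_last_of_getLast? hgl (by simp)
      exact h2
    · rw [List.get_eq_getElem]
      show (z :: q)[0 + 1]'(by simp; omega) = y
      rw [List.getElem_cons_succ]
      exact pft_getElem_zero hq (by omega)
    · left
      show ((z :: q).length + 1 - q.length) % (z :: q).length ≤ 2
      refine dist_le_two ?_
      simp only [List.length_cons]
      omega
  by_cases hc2 : ∃ w, A y w ∧ A w x ∧ w ∉ p
  · obtain ⟨w, hyw, hwx, hwp⟩ := hc2
    refine ⟨w :: p, cycle_cons hp hwp hyw hwx, ?_⟩
    have hlen : 2 ≤ p.length := pft_len_two hp hxy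
    refine ⟨⟨1, by simp; omega⟩, ⟨p.length, by simp⟩, ?_, ?_, ?_⟩
    · rw [List.get_eq_getElem]
      show (w :: p)[0 + 1]'(by simp; omega) = x
      rw [List.getElem_cons_succ]
      exact pft_getElem_zero hp (by omega)
    · rw [List.get_eq_getElem]
      have hgl : (w :: p).getLast? = some y := by
        rw [getLast?_cons_of_ne_nil hp.1.1, hp.2.2]
      exact getElem_last_of_getLast? hgl (by simp)
    · right
      show ((w :: p).length + 1 - p.length) % (w :: p).length ≤ 2
      refine dist_le_two ?_
      simp only [List.length_cons]
      omega
  push_neg at hc1 hc2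
  by_cases hb0 : ∀ w, ¬ (A y w ∧ A w x)
  · exact (min_path_contra hloops hxy hdeg haxy hayx hq hminq hc1 hb0).elim
  by_cases ha0 : ∀ z, ¬ (A x z ∧ A z y)
  · refine (min_path_contra hloops hxy.symm (by omega) hayx haxy hp hminp hc2 ha0).elim
  push_neg at hb0 ha0
  obtain ⟨z0, hz01, hz02⟩ := ha0
  obtain ⟨w0, hw01, hw02⟩ := hb0
  have h3 := ab_three hloops hxy hdeg haxy hayx
  have hz0m : z0 ∈ Finset.univ.filter (fun z => A x z ∧ A z y) :=
    Finset.mem_filter.mpr ⟨Finset.mem_univ _, hz01, hz02⟩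
  have hw0m : w0 ∈ Finset.univ.filter (fun z => A y z ∧ A z x) :=
    Finset.mem_filter.mpr ⟨Finset.mem_univ _, hw01, hw02⟩
  have hpair : ∃ z w, (A x z ∧ A z y) ∧ (A y w ∧ A w x) ∧ z ≠ w := by
    rcases Nat.lt_or_ge 1 (Finset.univ.filter (fun z => A x z ∧ A z y)).card with h | h
    · obtain ⟨z, hzm, hzne⟩ := Finset.exists_mem_ne h w0
      exact ⟨z, w0, (Finset.mem_filter.mp hzm).2, ⟨hw01, hw02⟩, hzne⟩
    · have ha1 : 1 ≤ (Finset.univ.filter (fun z => A x z ∧ A z y)).card :=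
        Finset.card_pos.mpr ⟨z0, hz0m⟩
      have hb2 : 1 < (Finset.univ.filter (fun z => A y z ∧ A z x)).card := by omega
      obtain ⟨w, hwm, hwne⟩ := Finset.exists_mem_ne hb2 z0
      exact ⟨z0, w, ⟨hz01, hz02⟩, (Finset.mem_filter.mp hwm).2, fun h' => hwne (h'.symm)⟩
  obtain ⟨z, w, ⟨hxz, hzy⟩, ⟨hyw, hwx⟩, hzw⟩ := hpair
  have hzx : z ≠ x := by intro h; rw [h] at hxz; exact hloops x hxz
  have hzy' : z ≠ y := by intro h; rw [h] at hzy; exact hloops y hzy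
  have hwx' : w ≠ x := by intro h; rw [h] at hwx; exact hloops x hwx
  have hwy : w ≠ y := by intro h; rw [h] at hyw; exact hloops y hyw
  refine ⟨[x, z, y, w], cycle4 hxz hzy hyw hwx hxy hzx hzy' hwx' hwy hzw,
    ⟨0, by simp⟩, ⟨2, by simp⟩, rfl, rfl, ?_⟩
  left
  show (([x, z, y, w].length) + 2 - 0) % [x, z, y, w].length ≤ 2
  norm_num
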